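/- arXiv:1307.2599 — 6 statements merged into one kernel-verified Lean document; each statement's English description precedes it below -/
import Mathlib

section
/- Let x, y ∈ [0,1] with x + y ≤ 1. Define à(x,y) := 2 − x − y − sqrt(4(1 − x − y) + (x − y)²). Then 0 ≤ (1/2)·Ã(x,y) ≤ min(x, y). -/
lemma aux_le_sqrt (a b : ℝ) (h : a^2 ≤ b) : a ≤ Real.sqrt b := by
  calc a ≤ |a| := le_abs_self a
    _ = Real.sqrt (a^2) := (Real.sqrt_sq_eq_abs a).symm
    _ ≤ Real.sqrt b := Real.sqrt_le_sqrt h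

theorem stmt0 (x y : ℝ) (hx : x ∈ Set.Icc (0:ℝ) 1) (hy : y ∈ Set.Icc (0:ℝ) 1)
    (hxy : x + y ≤ 1) :
    0 ≤ (1/2) * (2 - x - y - Real.sqrt (4*(1 - x - y) + (x - y)^2)) ∧
    (1/2) * (2 - x - y - Real.sqrt (4*(1 - x - y) + (x - y)^2)) ≤ min x y := by
  obtain ⟨hx0, hx1⟩ := hx
  obtain ⟨hy0, hy1⟩ := hy
  constructor
  · have h1 : Real.sqrt (4*(1 - x - y) + (x - y)^2) ≤ 2 - x - y := by
      have h2 : 4*(1 - x - y) + (x - y)^2 ≤ (2 - x - y)^2 := by nlinarith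
      calc Real.sqrt (4*(1 - x - y) + (x - y)^2) ≤ Real.sqrt ((2 - x - y)^2) :=
            Real.sqrt_le_sqrt h2
        _ = 2 - x - y := Real.sqrt_sq (by linarith)
    linarith
  · have hxle : (2 - 3*x - y) ≤ Real.sqrt (4*(1 - x - y) + (x - y)^2) :=
      aux_le_sqrt _ _ (by nlinarith)
    have hyle : (2 - x - 3*y) ≤ Real.sqrt (4*(1 - x - y) + (x - y)^2) :=
      aux_le_sqrt _ _ (by nlinarith)
    rw [le_min_iff]
    constructor <;> linarith
end

section
/- Let a, bᵖ, bⁿ ∈ ℓ₂(ℤ) be such that {a; bᵖ, bⁿ} is a tight framelet filter bank (i.e., |â(ξ)|² + |b̂ᵖ(ξ)|² + |b̂ⁿ(ξ)|² = 1 and â(ξ)conj(â(ξ+π)) + b̂ᵖ(ξ)conj(b̂ᵖ(ξ+π)) + b̂ⁿ(ξ)conj(b̂ⁿ(ξ+π)) = 0 for a.e. ξ). Then |b̂ᵖ(ξ+π)|² + |b̂ⁿ(ξ)|² ≥ A(ξ) for a.e. ξ ∈ [0,π], where A(ξ) := (2 − |â(ξ)|² − |â(ξ+π)|² − sqrt(4(1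 − |â(ξ)|² − |â(ξ+π)|²) + (|â(ξ)|² − |â(ξ+π)|²)²))/2. -/
open MeasureTheory Real

lemma key_ineq (A B p q P Q : ℝ) (hp : 0 ≤ p) (hq : 0 ≤ q) (hP : 0 ≤ P) (hQ : 0 ≤ Q)
    (e1 : A + p + q = 1) (e2 : B + P + Q = 1)
    (hAB : A * B ≤ (p + Q) * (P + q)) :
    P + q ≥ (2 - A - B - Real.sqrt (4*(1 - A - B) + (A - B)^2)) / 2 := by
  have hD : 4*(1 - A - B) + (A - B)^2 = (2 - A - B)^2 - 4*(A*B) := by ring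
  have hk : (2 - A - B - 2*(P + q))^2 ≤ (2 - A - B)^2 - 4*(A*B) := by nlinarith
  have h3 : 2 - A - B - 2*(P + q) ≤ Real.sqrt ((2 - A - B)^2 - 4*(A*B)) := by
    calc 2 - A - B - 2*(P + q) ≤ |2 - A - B - 2*(P + q)| := le_abs_self _
    _ = Real.sqrt ((2 - A - B - 2*(P + q))^2) := (Real.sqrt_sq_eq_abs _).symm
    _ ≤ _ := Real.sqrt_le_sqrt hk
  rw [hD]
  linarith

theorem stmt7 (a bp bn : ℝ → ℂ)
    (h1 : ∀ᵐ ξ : ℝ, ‖a ξ‖^2 + ‖bp ξ‖^2 + ‖bn ξ‖^2 = 1)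
    (h2 : ∀ᵐ ξ : ℝ,
      a ξ * star (a (ξ + π)) + bp ξ * star (bp (ξ + π)) + bn ξ * star (bn (ξ + π)) = 0) :
    ∀ᵐ ξ ∂(volume.restrict (Set.Icc (0:ℝ) π)),
      ‖bp (ξ + π)‖^2 + ‖bn ξ‖^2 ≥
        (2 - ‖a ξ‖^2 - ‖a (ξ + π)‖^2 -
          Real.sqrt (4*(1 - ‖a ξ‖^2 - ‖a (ξ + π)‖^2) + (‖a ξ‖^2 - ‖a (ξ + π)‖^2)^2)) / 2 := by
  have h1' : ∀ᵐ ξ : ℝ, ‖a (ξ + π)‖^2 + ‖bp (ξ + π)‖^2 + ‖bn (ξ + π)‖^2 = 1 :=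
    (measurePreserving_add_right volume π).quasiMeasurePreserving.ae h1
  have hall : ∀ᵐ ξ : ℝ,
      ‖bp (ξ + π)‖^2 + ‖bn ξ‖^2 ≥
        (2 - ‖a ξ‖^2 - ‖a (ξ + π)‖^2 -
          Real.sqrt (4*(1 - ‖a ξ‖^2 - ‖a (ξ + π)‖^2) + (‖a ξ‖^2 - ‖a (ξ + π)‖^2)^2)) / 2 := by
    filter_upwards [h1, h1', h2] with ξ e1 e2 hc
    have hsum : bp ξ * star (bp (ξ + π)) + bn ξ * star (bn (ξ + π))
        = -(a ξ * star (a (ξ + π))) := by linear_combination hc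
    have hnorm : ‖a ξ‖ * ‖a (ξ + π)‖ ≤ ‖bp ξ‖ * ‖bp (ξ + π)‖ + ‖bn ξ‖ * ‖bn (ξ + π)‖ := by
      calc ‖a ξ‖ * ‖a (ξ + π)‖ = ‖-(a ξ * star (a (ξ + π)))‖ := by
            rw [norm_neg, norm_mul, norm_star]
        _ = ‖bp ξ * star (bp (ξ + π)) + bn ξ * star (bn (ξ + π))‖ := by rw [hsum]
        _ ≤ ‖bp ξ * star (bp (ξ + π))‖ + ‖bn ξ * star (bn (ξ + π))‖ := norm_add_le _ _
        _ = ‖bp ξ‖ * ‖bp (ξ + π)‖ + ‖bn ξ‖ * ‖bn (ξ + π)‖ := by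
            rw [norm_mul, norm_mul, norm_star, norm_star]
    have hAB : ‖a ξ‖^2 * ‖a (ξ + π)‖^2
        ≤ (‖bp ξ‖^2 + ‖bn (ξ + π)‖^2) * (‖bp (ξ + π)‖^2 + ‖bn ξ‖^2) := by
      nlinarith [hnorm, norm_nonneg (a ξ), norm_nonneg (a (ξ + π)),
        norm_nonneg (bp ξ), norm_nonneg (bp (ξ + π)), norm_nonneg (bn ξ),
        norm_nonneg (bn (ξ + π)),
        sq_nonneg (‖bp ξ‖ * ‖bn ξ‖ - ‖bp (ξ + π)‖ * ‖bn (ξ + π)‖),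
        mul_nonneg (norm_nonneg (a ξ)) (norm_nonneg (a (ξ + π)))]
    exact key_ineq (‖a ξ‖^2) (‖a (ξ + π)‖^2) (‖bp ξ‖^2) (‖bn ξ‖^2)
      (‖bp (ξ + π)‖^2) (‖bn (ξ + π)‖^2)
      (sq_nonneg _) (sq_nonneg _) (sq_nonneg _) (sq_nonneg _)
      (by linarith) (by linarith) hAB
  exact ae_restrict_of_ae hall
end

section
/- Let Q and V be 2×2 matrices of Laurent polynomials over ℂ such that V(z)Q(z) is a diagonal matrix diag(c(z), d(z)) with c = 1 (the constant 1). Then there exist Laurent polynomials u₁, u₂, u₃, u₄, v₂, v₄ with u₁u₄ + u₂u₃ = 1, d = v₂v₄, and V(z) = diag(1, v₂(z))·[[u₁(z), −u₃(z)],[u₂(z), u₄(z)]], Q(z) = [[u₄(z), u₃(z)],[−u₂(z), u₁(z)]]·diag(1, v₄(z)). -/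
noncomputable section
open LaurentPolynomial Matrix

/-- The adjoint (star) of a Laurent polynomial: (Σ u(k)zᵏ)⋆ = Σ conj(u(k)) z⁻ᵏ. -/
def lstar (p : LaurentPolynomial ℂ) : LaurentPolynomial ℂ :=
  p.coeff.sum fun k c => LaurentPolynomial.C (starRingEnd ℂ c) * LaurentPolynomial.T (-k)

/-- Evaluation of a Laurent polynomial at a nonzero complex number. -/
def leval (z : ℂ) (p : LaurentPolynomial ℂ) : ℂ :=
  p.coeff.sum fun k c => c * z ^ k

/-- Substitution z ↦ -z in a Laurent polynomial. -/
def nsub (p : LaurentPolynomial ℂ) : LaurentPolynomial ℂ :=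
  p.coeff.sum fun k c => LaurentPolynomial.C (c * (-1 : ℂ) ^ k) * LaurentPolynomial.T k

/-- Substitution z ↦ z² in a Laurent polynomial. -/
def ssub (p : LaurentPolynomial ℂ) : LaurentPolynomial ℂ :=
  p.coeff.sum fun k c => LaurentPolynomial.C c * LaurentPolynomial.T (2 * k)

/-- Entrywise evaluation of a matrix of Laurent polynomials. -/
def meval {m n : ℕ} (z : ℂ) (M : Matrix (Fin m) (Fin n) (LaurentPolynomial ℂ)) :
    Matrix (Fin m) (Fin n) ℂ :=
  M.map (leval z)

/-- Star-adjoint transpose of a matrix of Laurent polynomials. -/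
def mstar {m n : ℕ} (M : Matrix (Fin m) (Fin n) (LaurentPolynomial ℂ)) :
    Matrix (Fin n) (Fin m) (LaurentPolynomial ℂ) :=
  (M.map lstar)ᵀ

/-- The γ-coset of a Laurent polynomial: coefficient of zᵏ is the coefficient of z^{γ+2k}. -/
def coset (γ : ℤ) (p : LaurentPolynomial ℂ) : LaurentPolynomial ℂ :=
  p.coeff.sum fun k c => if (k - γ) % 2 = 0 then LaurentPolynomial.C c * LaurentPolynomial.T ((k - γ) / 2) else 0

theorem stmt12 (V Q : Matrix (Fin 2) (Fin 2) (LaurentPolynomial ℂ))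
    (d : LaurentPolynomial ℂ)
    (h : V * Q = Matrix.diagonal ![1, d]) :
    ∃ u₁ u₂ u₃ u₄ v₂ v₄ : LaurentPolynomial ℂ,
      u₁ * u₄ + u₂ * u₃ = 1 ∧ d = v₂ * v₄ ∧
      V = Matrix.diagonal ![1, v₂] * !![u₁, -u₃; u₂, u₄] ∧
      Q = !![u₄, u₃; -u₂, u₁] * Matrix.diagonal ![1, v₄] := by
  have h00 : V 0 0 * Q 0 0 + V 0 1 * Q 1 0 = 1 := by
    have := congrFun (congrFun h 0) 0
    simpa [Matrix.mul_apply, Fin.sum_univ_two, Matrix.diagonal] using this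
  have h01 : V 0 0 * Q 0 1 + V 0 1 * Q 1 1 = 0 := by
    have := congrFun (congrFun h 0) 1
    simpa [Matrix.mul_apply, Fin.sum_univ_two, Matrix.diagonal] using this
  have h10 : V 1 0 * Q 0 0 + V 1 1 * Q 1 0 = 0 := by
    have := congrFun (congrFun h 1) 0
    simpa [Matrix.mul_apply, Fin.sum_univ_two, Matrix.diagonal] using this
  have h11 : V 1 0 * Q 0 1 + V 1 1 * Q 1 1 = d := by
    have := congrFun (congrFun h 1) 1
    simpa [Matrix.mul_apply, Fin.sum_univ_two, Matrix.diagonal] using this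
  refine ⟨V 0 0, -(Q 1 0), -(V 0 1), Q 0 0,
    V 0 0 * V 1 1 - V 0 1 * V 1 0, Q 0 0 * Q 1 1 - Q 1 0 * Q 0 1, ?_, ?_, ?_, ?_⟩
  · linear_combination h00
  · linear_combination (-(V 1 0 * Q 0 1 + V 1 1 * Q 1 1)) * h00
      + (V 1 0 * Q 0 0 + V 1 1 * Q 1 0) * h01 - h11
  · refine Matrix.ext fun i j => ?_
    fin_cases i <;> fin_cases j <;>
      simp [Matrix.mul_apply, Fin.sum_univ_two, Matrix.diagonal]
    · linear_combination (-(V 1 0)) * h00 + V 0 0 * h10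
    · linear_combination (-(V 1 1)) * h00 + V 0 1 * h10
  · refine Matrix.ext fun i j => ?_
    fin_cases i <;> fin_cases j <;>
      simp [Matrix.mul_apply, Fin.sum_univ_two, Matrix.diagonal]
    · linear_combination (-(Q 0 1)) * h00 + Q 0 0 * h01
    · linear_combination (-(Q 1 1)) * h00 + Q 1 0 * h01
end
end

section
/- Let P(z) = [[p₁(z), p₃(z)],[p₂(z), p₄(z)]] be a 2×2 matrix of Laurent polynomials over ℂ. Define the star operation by (Σ u(k)z^k)* := Σ conj(u(k)) z^{−k}. Then P(z)P*(z) = I₂ for all z ∈ ℂ∖{0} if and only if there exist λ ∈ ℂ with |λ| = 1 and k ∈ ℤ such that p₃(z) = −λ z^k p₂*(z), p₄(z) = λ z^k p₁*(z), and p₁(z)p₁*(z) + p₂(z)p₂*(z) = 1 for all z ∈ ℂ∖{0}. -/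
noncomputable section
open LaurentPolynomial Matrix

namespace Stmt13Aux

/-- Evaluation at a nonzero complex number, as a ring homomorphism. -/
def levalHom (z : ℂˣ) : LaurentPolynomial ℂ →+* ℂ :=
  AddMonoidAlgebra.liftNCRingHom (RingHom.id ℂ)
    ((Units.coeHom ℂ).comp (zpowersHom ℂˣ z)) fun _ _ => Commute.all _ _

lemma levalHom_single (z : ℂˣ) (n : ℤ) (a : ℂ) :
    levalHom z (AddMonoidAlgebra.single n a) = a * (z : ℂ) ^ n := by
  show AddMonoidAlgebra.liftNC _ _ (AddMonoidAlgebra.single n a) = a * (z : ℂ) ^ n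
  rw [AddMonoidAlgebra.liftNC_single]
  simp [Units.val_zpow_eq_zpow_val]

lemma leval_eq (z : ℂˣ) (p : LaurentPolynomial ℂ) : leval (z : ℂ) p = levalHom z p := by
  induction p using LaurentPolynomial.induction_on' with
  | add p q hp hq =>
      rw [_root_.map_add, ← hp, ← hq]
      unfold _root_.leval
      rw [AddMonoidAlgebra.coeff_add, Finsupp.sum_add_index']
      · intro k; exact zero_mul _
      · intro k c₁ c₂; exact add_mul _ _ _
  | C_mul_T n a =>
      rw [← single_eq_C_mul_T, levalHom_single]
      unfold _root_.leval
      rw [AddMonoidAlgebra.coeff_single, Finsupp.sum_single_index]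
      simp

/-- `T (-·)` as a monoid hom from `Multiplicative ℤ`. -/
def Tneg : Multiplicative ℤ →* LaurentPolynomial ℂ where
  toFun k := T (-(Multiplicative.toAdd k))
  map_one' := by simp
  map_mul' x y := by
    show (T (-(Multiplicative.toAdd x + Multiplicative.toAdd y)) : LaurentPolynomial ℂ) = _
    rw [neg_add, T_add]

/-- The star operation as a ring homomorphism. -/
def lstarHom : LaurentPolynomial ℂ →+* LaurentPolynomial ℂ :=
  AddMonoidAlgebra.liftNCRingHom (LaurentPolynomial.C.comp (starRingEnd ℂ)) Tneg
    fun _ _ => Commute.all _ _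

lemma Tneg_apply (x : Multiplicative ℤ) : Tneg x = T (-(Multiplicative.toAdd x)) := rfl

lemma lstar_single (n : ℤ) (a : ℂ) :
    lstar (AddMonoidAlgebra.single n a) = LaurentPolynomial.C (starRingEnd ℂ a) * T (-n) := by
  unfold lstar
  rw [AddMonoidAlgebra.coeff_single, Finsupp.sum_single_index]
  simp

lemma lstar_eq (p : LaurentPolynomial ℂ) : lstar p = lstarHom p := by
  induction p using LaurentPolynomial.induction_on' with
  | add p q hp hq =>
      rw [_root_.map_add, ← hp, ← hq]
      unfold lstar
      rw [AddMonoidAlgebra.coeff_add, Finsupp.sum_add_index']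
      · intro k; simp
      · intro k c₁ c₂; rw [_root_.map_add, _root_.map_add, add_mul]
  | C_mul_T n a =>
      rw [← single_eq_C_mul_T, lstar_single]
      show _ = AddMonoidAlgebra.liftNC _ _ (AddMonoidAlgebra.single n a)
      rw [AddMonoidAlgebra.liftNC_single]
      simp only [RingHom.coe_comp, Function.comp_apply, Tneg_apply, toAdd_ofAdd]
      rfl

lemma lstar_mul (p q : LaurentPolynomial ℂ) : lstar (p * q) = lstar p * lstar q := by
  simp only [lstar_eq, _root_.map_mul]

lemma lstar_add (p q : LaurentPolynomial ℂ) : lstar (p + q) = lstar p + lstar q := by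
  simp only [lstar_eq, _root_.map_add]

lemma lstar_sub (p q : LaurentPolynomial ℂ) : lstar (p - q) = lstar p - lstar q := by
  simp only [lstar_eq, _root_.map_sub]

lemma lstar_neg (p : LaurentPolynomial ℂ) : lstar (-p) = -lstar p := by
  simp only [lstar_eq, _root_.map_neg]

lemma lstar_C (a : ℂ) : lstar (LaurentPolynomial.C a) = LaurentPolynomial.C (starRingEnd ℂ a) := by
  rw [← single_eq_C (R := ℂ) a, lstar_single, neg_zero, T_zero, mul_one]

lemma lstar_T (n : ℤ) : lstar (T n : LaurentPolynomial ℂ) = T (-n) := by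
  show lstar (AddMonoidAlgebra.single n 1) = T (-n)
  rw [lstar_single]
  simp

lemma lstar_lstar (p : LaurentPolynomial ℂ) : lstar (lstar p) = p := by
  induction p using LaurentPolynomial.induction_on' with
  | add p q hp hq => rw [lstar_add, lstar_add, hp, hq]
  | C_mul_T n a =>
      rw [lstar_mul, lstar_C, lstar_T, lstar_mul, lstar_C, lstar_T]
      simp [Complex.conj_conj]

lemma leval_C (z : ℂ) (a : ℂ) : leval z (LaurentPolynomial.C a) = a := by
  show leval z (AddMonoidAlgebra.single 0 a) = a
  unfold _root_.leval
  rw [AddMonoidAlgebra.coeff_single, Finsupp.sum_single_index] <;> simp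

lemma leval_one (z : ℂ) : leval z 1 = 1 := by
  show leval z (AddMonoidAlgebra.single 0 1) = 1
  unfold _root_.leval
  rw [AddMonoidAlgebra.coeff_single, Finsupp.sum_single_index] <;> simp

lemma leval_mul {z : ℂ} (hz : z ≠ 0) (p q : LaurentPolynomial ℂ) :
    leval z (p * q) = leval z p * leval z q := by
  have h := leval_eq (Units.mk0 z hz)
  simp only [Units.val_mk0] at h
  rw [h, h, h, _root_.map_mul]

lemma leval_toLaurent {z : ℂ} (hz : z ≠ 0) (f : Polynomial ℂ) :
    leval z (Polynomial.toLaurent f) = f.eval z := by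
  have h := leval_eq (Units.mk0 z hz)
  simp only [Units.val_mk0] at h
  rw [h]
  have key : (levalHom (Units.mk0 z hz)).comp Polynomial.toLaurent
      = Polynomial.evalRingHom z := by
    apply Polynomial.ringHom_ext
    · intro a
      simp only [RingHom.coe_comp, Function.comp_apply, Polynomial.toLaurent_C,
        Polynomial.coe_evalRingHom, Polynomial.eval_C]
      rw [← single_eq_C (R := ℂ) a, levalHom_single]
      simp
    · simp only [RingHom.coe_comp, Function.comp_apply, Polynomial.toLaurent_X,
        Polynomial.coe_evalRingHom, Polynomial.eval_X]
      show levalHom (Units.mk0 z hz) (AddMonoidAlgebra.single 1 1) = z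
      rw [levalHom_single]
      simp
  exact RingHom.congr_fun key f

lemma leval_injective (p q : LaurentPolynomial ℂ)
    (h : ∀ z : ℂ, z ≠ 0 → leval z p = leval z q) : p = q := by
  have h0 : ∀ z : ℂ, z ≠ 0 → leval z (p - q) = 0 := by
    intro z hz
    have he := leval_eq (Units.mk0 z hz)
    simp only [Units.val_mk0] at he
    rw [he, _root_.map_sub, ← he, ← he, h z hz, sub_self]
  obtain ⟨n, f, hf⟩ := (p - q).exists_T_pow
  have hfe : ∀ z : ℂ, f.eval z * z = 0 := by
    intro z
    rcases eq_or_ne z 0 with rfl | hz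
    · simp
    · have h1 : leval z (Polynomial.toLaurent f) = 0 := by
        rw [hf, leval_mul hz, h0 z hz, zero_mul]
      rw [leval_toLaurent hz] at h1
      rw [h1, zero_mul]
  have hfX : f * Polynomial.X = 0 := by
    apply Polynomial.funext
    intro r
    simpa using hfe r
  have hf0 : f = 0 := by
    rcases mul_eq_zero.mp hfX with h' | h'
    · exact h'
    · exact absurd h' Polynomial.X_ne_zero
  have hpq : (p - q) * T n = 0 := by rw [← hf, hf0, _root_.map_zero]
  have : p - q = 0 := by
    have h2 := congrArg (· * T (-n)) hpq
    simpa using h2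
  exact sub_eq_zero.mp this

/-- Characterization of elements with `d * d⋆ = 1`. -/
lemma exists_unit (d : LaurentPolynomial ℂ) (h : d * lstar d = 1) :
    ∃ (l : ℂ) (k : ℤ), ‖l‖ = 1 ∧ d = LaurentPolynomial.C l * T k := by
  obtain ⟨n, f, hf⟩ := d.exists_T_pow
  obtain ⟨m, g, hg⟩ := (lstar d).exists_T_pow
  have hfg : f * g = Polynomial.X ^ (n + m) := by
    apply Polynomial.toLaurent_injective
    rw [_root_.map_mul, hf, hg, Polynomial.toLaurent_X_pow]
    calc d * T n * (lstar d * T m) = (d * lstar d) * (T n * T m) := by ring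
    _ = T ((n : ℤ) + m) := by rw [h, one_mul, ← T_add]
    _ = T ((n + m : ℕ) : ℤ) := by push_cast; ring_nf
  have hdvd : f ∣ Polynomial.X ^ (n + m) := ⟨g, hfg.symm⟩
  obtain ⟨i, _, hassoc⟩ := (dvd_prime_pow Polynomial.prime_X _).mp hdvd
  obtain ⟨u, hu⟩ := hassoc
  obtain ⟨c, hc, hcu⟩ := Polynomial.isUnit_iff.mp u.isUnit
  have hc0 : c ≠ 0 := hc.ne_zero
  have hfX : f * Polynomial.C c = Polynomial.X ^ i := by rw [hcu, hu]
  have hfform : f = Polynomial.C c⁻¹ * Polynomial.X ^ i := by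
    have : f * Polynomial.C c * Polynomial.C c⁻¹ = Polynomial.X ^ i * Polynomial.C c⁻¹ := by
      rw [hfX]
    rw [mul_assoc, ← Polynomial.C_mul, mul_inv_cancel₀ hc0, Polynomial.C_1, mul_one] at this
    rw [this]; ring
  have hd : d = LaurentPolynomial.C c⁻¹ * T ((i : ℤ) - n) := by
    have h1 : Polynomial.toLaurent f = d * T n := hf
    have h2 := congrArg (· * T (-(n : ℤ))) h1
    simp only [mul_T_assoc, add_neg_cancel, T_zero, mul_one] at h2
    rw [← h2, hfform, _root_.map_mul, Polynomial.toLaurent_C, Polynomial.toLaurent_X_pow, mul_T_assoc,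
      sub_eq_add_neg]
  refine ⟨c⁻¹, (i : ℤ) - n, ?_, hd⟩
  -- show |c⁻¹| = 1
  have hls : lstar d = LaurentPolynomial.C (starRingEnd ℂ c⁻¹) * T (-((i : ℤ) - n)) := by
    rw [hd, lstar_mul, lstar_C, lstar_T]
  have hCeq : LaurentPolynomial.C (c⁻¹ * starRingEnd ℂ c⁻¹) = 1 := by
    rw [← h, hls, hd, _root_.map_mul]
    calc LaurentPolynomial.C c⁻¹ * LaurentPolynomial.C (starRingEnd ℂ c⁻¹)
        = (LaurentPolynomial.C c⁻¹ * LaurentPolynomial.C (starRingEnd ℂ c⁻¹))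
          * (T ((i : ℤ) - n) * T (-((i : ℤ) - n))) := by
          rw [← T_add, add_neg_cancel, T_zero, mul_one]
    _ = LaurentPolynomial.C c⁻¹ * T ((i : ℤ) - n)
          * (LaurentPolynomial.C (starRingEnd ℂ c⁻¹) * T (-((i : ℤ) - n))) := by ring
  have hone : c⁻¹ * starRingEnd ℂ c⁻¹ = 1 := by
    have h2 := congrArg (leval 1) hCeq
    rwa [leval_C, leval_one] at h2
  have hnsq : Complex.normSq c⁻¹ = 1 := by
    have := hone
    rw [Complex.mul_conj] at this
    exact_mod_cast this
  rw [Complex.norm_def, hnsq, Real.sqrt_one]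

lemma meval_mul {z : ℂ} (hz : z ≠ 0) {m n k : ℕ}
    (M : Matrix (Fin m) (Fin n) (LaurentPolynomial ℂ))
    (N : Matrix (Fin n) (Fin k) (LaurentPolynomial ℂ)) :
    meval z (M * N) = meval z M * meval z N := by
  have h : leval z = ⇑(levalHom (Units.mk0 z hz)) := by
    funext p
    have := leval_eq (Units.mk0 z hz) p
    simpa using this
  unfold meval
  rw [h]
  exact Matrix.map_mul

lemma meval_one {n : ℕ} (z : ℂ) :
    meval z (1 : Matrix (Fin n) (Fin n) (LaurentPolynomial ℂ)) = 1 := by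
  unfold meval
  apply Matrix.map_one
  · show leval z 0 = 0
    unfold _root_.leval
    simp
  · exact leval_one z

lemma mstar_fin_two (a b c d : LaurentPolynomial ℂ) :
    mstar !![a, b; c, d] = !![lstar a, lstar c; lstar b, lstar d] := by
  unfold mstar
  ext i j
  fin_cases i <;> fin_cases j <;> rfl

lemma entries_eq {α : Type*} {a b c d e f g h : α} (H : !![a, b; c, d] = !![e, f; g, h]) :
    a = e ∧ b = f ∧ c = g ∧ d = h :=
  ⟨by simpa using congrFun (congrFun H 0) 0, by simpa using congrFun (congrFun H 0) 1,
   by simpa using congrFun (congrFun H 1) 0, by simpa using congrFun (congrFun H 1) 1⟩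

end Stmt13Aux

open Stmt13Aux in
theorem stmt13 (p₁ p₂ p₃ p₄ : LaurentPolynomial ℂ) :
    (∀ z : ℂ, z ≠ 0 →
        meval z !![p₁, p₃; p₂, p₄] * meval z (mstar !![p₁, p₃; p₂, p₄]) = 1) ↔
      ∃ (l : ℂ) (k : ℤ), ‖l‖ = 1 ∧
        p₃ = -(LaurentPolynomial.C l * LaurentPolynomial.T k) * lstar p₂ ∧
        p₄ = LaurentPolynomial.C l * LaurentPolynomial.T k * lstar p₁ ∧
        (∀ z : ℂ, z ≠ 0 → leval z (p₁ * lstar p₁ + p₂ * lstar p₂) = 1) := by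
  constructor
  · intro h
    have hAB : !![p₁, p₃; p₂, p₄] * mstar !![p₁, p₃; p₂, p₄] = 1 := by
      refine Matrix.ext fun i j => leval_injective _ _ (fun z hz => ?_)
      have e : meval z (!![p₁, p₃; p₂, p₄] * mstar !![p₁, p₃; p₂, p₄])
          = meval z (1 : Matrix (Fin 2) (Fin 2) (LaurentPolynomial ℂ)) := by
        rw [meval_mul hz, meval_one]
        exact h z hz
      exact congrFun (congrFun e i) j
    have hBA : mstar !![p₁, p₃; p₂, p₄] * !![p₁, p₃; p₂, p₄] = 1 :=
      mul_eq_one_comm.mp hAB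
    rw [mstar_fin_two, Matrix.mul_fin_two, Matrix.one_fin_two] at hAB hBA
    obtain ⟨ha, hb, hc, hd⟩ := entries_eq hAB
    obtain ⟨he, -, -, -⟩ := entries_eq hBA
    have hld : lstar (p₁ * p₄ - p₂ * p₃) = lstar p₁ * lstar p₄ - lstar p₂ * lstar p₃ := by
      rw [lstar_sub, lstar_mul, lstar_mul]
    have hDu : (p₁ * p₄ - p₂ * p₃) * lstar (p₁ * p₄ - p₂ * p₃) = 1 := by
      rw [hld]
      calc (p₁ * p₄ - p₂ * p₃) * (lstar p₁ * lstar p₄ - lstar p₂ * lstar p₃)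
          = (p₁ * lstar p₁ + p₃ * lstar p₃) * (p₂ * lstar p₂ + p₄ * lstar p₄)
            - (p₁ * lstar p₂ + p₃ * lstar p₄) * (p₂ * lstar p₁ + p₄ * lstar p₃) := by ring
      _ = 1 := by rw [ha, hb, hc, hd]; ring
    obtain ⟨l, k, habs, hDf⟩ := exists_unit _ hDu
    refine ⟨l, k, habs, ?_, ?_, ?_⟩
    · rw [← hDf]
      linear_combination p₄ * hb - p₃ * hd
    · rw [← hDf]
      linear_combination p₃ * hc - p₄ * ha
    · intro z hz
      have h1 : p₁ * lstar p₁ + p₂ * lstar p₂ = 1 := by linear_combination he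
      rw [h1, leval_one]
  · rintro ⟨l, k, habs, h3, h4, hnorm⟩ z hz
    have he : p₁ * lstar p₁ + p₂ * lstar p₂ = 1 :=
      leval_injective _ _ fun w hw => by rw [leval_one]; exact hnorm w hw
    have hll : l * starRingEnd ℂ l = 1 := by
      have h2 : Complex.normSq l = 1 := by
        rw [← Complex.sq_norm, habs]; norm_num
      rw [Complex.mul_conj, h2, Complex.ofReal_one]
    have hCl : (LaurentPolynomial.C l * T k) * (LaurentPolynomial.C (starRingEnd ℂ l) * T (-k))
        = 1 := by
      calc (LaurentPolynomial.C l * T k) * (LaurentPolynomial.C (starRingEnd ℂ l) * T (-k))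
          = LaurentPolynomial.C (l * starRingEnd ℂ l) * (T k * T (-k)) := by
            rw [_root_.map_mul]; ring
      _ = 1 := by rw [hll, ← T_add, add_neg_cancel, T_zero, _root_.map_one, one_mul]
    have hstar3 : lstar p₃ = -(LaurentPolynomial.C (starRingEnd ℂ l) * T (-k)) * p₂ := by
      rw [h3, lstar_mul, lstar_neg, lstar_mul, lstar_C, lstar_T, lstar_lstar]
    have hstar4 : lstar p₄ = LaurentPolynomial.C (starRingEnd ℂ l) * T (-k) * p₁ := by
      rw [h4, lstar_mul, lstar_mul, lstar_C, lstar_T, lstar_lstar]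
    have hmat : !![p₁, p₃; p₂, p₄] * mstar !![p₁, p₃; p₂, p₄] = 1 := by
      rw [mstar_fin_two, Matrix.mul_fin_two, Matrix.one_fin_two]
      have e00 : p₁ * lstar p₁ + p₃ * lstar p₃ = 1 := by
        rw [hstar3, h3]; linear_combination he + p₂ * lstar p₂ * hCl
      have e01 : p₁ * lstar p₂ + p₃ * lstar p₄ = 0 := by
        rw [hstar4, h3]; linear_combination (-(p₁ * lstar p₂)) * hCl
      have e10 : p₂ * lstar p₁ + p₄ * lstar p₃ = 0 := by
        rw [hstar3, h4]; linear_combination (-(p₂ * lstar p₁)) * hCl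
      have e11 : p₂ * lstar p₂ + p₄ * lstar p₄ = 1 := by
        rw [hstar4, h4]; linear_combination he + p₁ * lstar p₁ * hCl
      rw [e00, e01, e10, e11]
    rw [← meval_one z, ← hmat, meval_mul hz]
end
end

section
/- Let Q, V, Q̊, V̊ be 2×2 matrices of Laurent polynomials over ℂ such that V(z)Q(z) = diag(1, d(z)) = V̊(z)Q̊(z) for all z ∈ ℂ∖{0}, and det(V̊(z)) = λ z^k det(V(z)) for some λ ∈ ℂ∖{0} and k ∈ ℤ. Then there exists a 2×2 matrix U of Laurent polynomials with det(U(z)) = λ z^k and V̊(z) = V(z)U(z). -/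
noncomputable section
open LaurentPolynomial Matrix

def levalHom (z : ℂ) (hz : z ≠ 0) : LaurentPolynomial ℂ →+* ℂ :=
  AddMonoidAlgebra.liftNCRingHom (RingHom.id ℂ)
    ((Units.coeHom ℂ).comp ((zpowersHom ℂˣ) (Units.mk0 z hz)))
    (fun _ _ => Commute.all _ _)

lemma leval_single (z : ℂ) (n : ℤ) (c : ℂ) : leval z (AddMonoidAlgebra.single n c) = c * z ^ n :=
  Finsupp.sum_single_index (zero_mul _)

lemma leval_add (z : ℂ) (p q : LaurentPolynomial ℂ) :
    leval z (p + q) = leval z p + leval z q := by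
  rw [_root_.leval, _root_.leval, _root_.leval, AddMonoidAlgebra.coeff_add]; exact Finsupp.sum_add_index' (fun _ => zero_mul _) (fun _ b c => add_mul b c _)

lemma levalHom_apply (z : ℂ) (hz : z ≠ 0) (p : LaurentPolynomial ℂ) :
    levalHom z hz p = leval z p := by
  induction p using AddMonoidAlgebra.induction_linear with
  | zero => simp [_root_.leval]
  | add p q hp hq => rw [map_add, leval_add, hp, hq]
  | single n c =>
    rw [leval_single]
    simp only [levalHom, AddMonoidAlgebra.liftNCRingHom, RingHom.coe_mk, MonoidHom.coe_mk,
      OneHom.coe_mk, AddMonoidHom.toFun_eq_coe, AddMonoidHom.coe_coe]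
    erw [AddMonoidAlgebra.liftNC_single]
    simp [zpowersHom_apply, Units.val_zpow_eq_zpow_val]

lemma levalHom_toLaurent (z : ℂ) (hz : z ≠ 0) (p : Polynomial ℂ) :
    levalHom z hz (p.toLaurent) = p.eval z := by
  have : (levalHom z hz).comp (Polynomial.toLaurent) = Polynomial.evalRingHom z := by
    apply Polynomial.ringHom_ext
    · intro a
      rw [RingHom.comp_apply, Polynomial.toLaurent_C, levalHom_apply, ← single_eq_C,
        leval_single]
      simp
    · rw [RingHom.comp_apply, Polynomial.toLaurent_X, levalHom_apply]
      show leval z (AddMonoidAlgebra.single (1 : ℤ) (1 : ℂ)) = _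
      rw [leval_single]
      simp
  exact congrFun (congrArg (fun f => f.toFun) this) p

lemma leval_inj {p q : LaurentPolynomial ℂ} (h : ∀ z : ℂ, z ≠ 0 → leval z p = leval z q) :
    p = q := by
  have h0 : ∀ (z : ℂ) (hz : z ≠ 0), levalHom z hz (p - q) = 0 := by
    intro z hz
    rw [map_sub, levalHom_apply, levalHom_apply, h z hz, sub_self]
  obtain ⟨n, f, hf⟩ := (p - q).exists_T_pow
  have hf0 : f = 0 := by
    apply Polynomial.eq_zero_of_infinite_isRoot
    apply Set.Infinite.mono (s := {z : ℂ | z ≠ 0})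
    · intro z hz
      have h2 : levalHom z hz (f.toLaurent) = 0 := by
        rw [hf, _root_.map_mul, h0 z hz, zero_mul]
      rw [levalHom_toLaurent] at h2
      exact h2
    · exact Set.infinite_of_finite_compl (by simp)
  have h1 : (p - q) * T (n : ℤ) = 0 := by rw [← hf, hf0, map_zero]
  have h3 := congrArg (· * T (-(n : ℤ))) h1
  simp only [zero_mul, mul_assoc, ← T_add, add_neg_cancel, T_zero, mul_one] at h3
  exact sub_eq_zero.mp h3

lemma meval_mul {n : ℕ} (z : ℂ) (hz : z ≠ 0) (M N : Matrix (Fin n) (Fin n) (LaurentPolynomial ℂ)) :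
    meval z (M * N) = meval z M * meval z N := by
  have hc : leval z = ⇑(levalHom z hz) := by funext p; rw [levalHom_apply]
  simp only [meval, hc]
  exact Matrix.map_mul

lemma eq_of_meval {n : ℕ} (M N : Matrix (Fin n) (Fin n) (LaurentPolynomial ℂ))
    (h : ∀ z : ℂ, z ≠ 0 → meval z M = meval z N) : M = N := by
  refine Matrix.ext fun i j => ?_
  apply leval_inj
  intro z hz
  exact congrFun (congrFun (h z hz) i) j

theorem stmt14 (V Q V' Q' : Matrix (Fin 2) (Fin 2) (LaurentPolynomial ℂ))
    (d : LaurentPolynomial ℂ) (l : ℂ) (k : ℤ) (hl : l ≠ 0)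
    (h1 : ∀ z : ℂ, z ≠ 0 → meval z V * meval z Q = meval z (Matrix.diagonal ![1, d]))
    (h2 : ∀ z : ℂ, z ≠ 0 → meval z V' * meval z Q' = meval z (Matrix.diagonal ![1, d]))
    (hdet : V'.det = LaurentPolynomial.C l * LaurentPolynomial.T k * V.det) :
    ∃ U : Matrix (Fin 2) (Fin 2) (LaurentPolynomial ℂ),
      U.det = LaurentPolynomial.C l * LaurentPolynomial.T k ∧ V' = V * U := by
  have key1 : V * Q = Matrix.diagonal ![1, d] := by
    apply eq_of_meval
    intro z hz
    rw [meval_mul z hz]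
    exact h1 z hz
  have key2 : V' * Q' = Matrix.diagonal ![1, d] := by
    apply eq_of_meval
    intro z hz
    rw [meval_mul z hz]
    exact h2 z hz
  set t : LaurentPolynomial ℂ := LaurentPolynomial.C l * LaurentPolynomial.T k with ht
  set a := V 0 0; set b := V 0 1; set c := V 1 0; set dd := V 1 1
  set a' := V' 0 0; set b' := V' 0 1; set c' := V' 1 0; set d' := V' 1 1
  set x := Q 0 0; set y := Q 1 0
  set x' := Q' 0 0; set y' := Q' 1 0
  have e1 : a * x + b * y = 1 := by
    have := congrFun (congrFun key1 0) 0
    simpa [Matrix.mul_apply, Fin.sum_univ_two, Matrix.diagonal] using this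
  have e2 : c * x + dd * y = 0 := by
    have := congrFun (congrFun key1 1) 0
    simpa [Matrix.mul_apply, Fin.sum_univ_two, Matrix.diagonal] using this
  have e3 : a' * x' + b' * y' = 1 := by
    have := congrFun (congrFun key2 0) 0
    simpa [Matrix.mul_apply, Fin.sum_univ_two, Matrix.diagonal] using this
  have e4 : c' * x' + d' * y' = 0 := by
    have := congrFun (congrFun key2 1) 0
    simpa [Matrix.mul_apply, Fin.sum_univ_two, Matrix.diagonal] using this
  have e5 : a' * d' - b' * c' = t * (a * dd - b * c) := by
    have h1 := hdet
    rw [Matrix.det_fin_two, Matrix.det_fin_two] at h1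
    exact h1
  refine ⟨Matrix.of ![![x * a' + t * (b * y'), x * b' - t * (b * x')],
                     ![y * a' - t * (a * y'), y * b' + t * (a * x')]], ?_, ?_⟩
  · rw [Matrix.det_fin_two_of]
    linear_combination (t * (a' * x' + b' * y')) * e1 + t * e3
  · refine Matrix.ext fun i j => ?_
    fin_cases i <;> fin_cases j <;>
      simp [Matrix.mul_apply, Fin.sum_univ_two]
    · linear_combination (-a') * e1
    · linear_combination (-b') * e1
    · linear_combination (-a') * e2 - y' * e5 - c' * e3 + a' * e4
    · linear_combination (-b') * e2 + x' * e5 - d' * e3 + b' * e4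
end
end

section
/- Suppose {a; b₁, b₂} is a finitely supported tight framelet filter bank. Define the Laurent polynomial d_{b₁,b₂} by d_{b₁,b₂}(z²) := z[b₁(z)b₂(−z) − b₁(−z)b₂(z)]. Then d_{b₁,b₂} is a well-defined Laurent polynomial and |d_{b₁,b₂}(z²)|² = 1 − |ã(z)|² − |ã(−z)|² for all z ∈ 𝕋 = {z ∈ ℂ : |z| = 1}, where ã denotes the z-transform (Laurent polynomial) of a. -/
noncomputable section
open LaurentPolynomial Matrix

namespace Stmt17Aux
open Finsupp

/-- rewrite the four defs in terms of `Finsupp.single` -/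
lemma lstar_def (p : LaurentPolynomial ℂ) :
    lstar p = p.coeff.sum fun k c => AddMonoidAlgebra.single (-k) (starRingEnd ℂ c) := by
  unfold lstar; simp_rw [single_eq_C_mul_T]
lemma nsub_def (p : LaurentPolynomial ℂ) :
    nsub p = p.coeff.sum fun k c => AddMonoidAlgebra.single k (c * (-1:ℂ)^k) := by
  unfold nsub; simp_rw [single_eq_C_mul_T]
lemma ssub_def (p : LaurentPolynomial ℂ) :
    ssub p = p.coeff.sum fun k c => AddMonoidAlgebra.single (2*k) c := by
  unfold ssub; simp_rw [single_eq_C_mul_T]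

/-- additive bundles -/
def lstarA : LaurentPolynomial ℂ →+ LaurentPolynomial ℂ where
  toFun := lstar
  map_zero' := by rw [lstar_def]; exact Finsupp.sum_zero_index
  map_add' p q := by
    simp only [lstar_def]
    exact Finsupp.sum_add_index' (fun k => by simp) (fun k c₁ c₂ => by simp [map_add, Finsupp.single_add])

def nsubA : LaurentPolynomial ℂ →+ LaurentPolynomial ℂ where
  toFun := nsub
  map_zero' := by rw [nsub_def]; exact Finsupp.sum_zero_index
  map_add' p q := by
    simp only [nsub_def]
    exact Finsupp.sum_add_index' (fun k => by simp) (fun k c₁ c₂ => by simp [add_mul, Finsupp.single_add])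

def ssubA : LaurentPolynomial ℂ →+ LaurentPolynomial ℂ where
  toFun := ssub
  map_zero' := by rw [ssub_def]; exact Finsupp.sum_zero_index
  map_add' p q := by
    simp only [ssub_def]
    exact Finsupp.sum_add_index' (fun k => by simp) (fun k c₁ c₂ => by simp [Finsupp.single_add])

def levalA (z : ℂ) : LaurentPolynomial ℂ →+ ℂ where
  toFun := leval z
  map_zero' := by unfold _root_.leval; exact Finsupp.sum_zero_index
  map_add' p q := by
    show leval z (p + q) = leval z p + leval z q
    unfold _root_.leval
    exact Finsupp.sum_add_index' (fun k => by simp) (fun k c₁ c₂ => by simp [add_mul])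

lemma lstar_single (k : ℤ) (c : ℂ) :
    lstar (AddMonoidAlgebra.single k c : LaurentPolynomial ℂ) = AddMonoidAlgebra.single (-k) (starRingEnd ℂ c) := by
  rw [lstar_def, AddMonoidAlgebra.coeff_single, Finsupp.sum_single_index (by simp)]
lemma nsub_single (k : ℤ) (c : ℂ) :
    nsub (AddMonoidAlgebra.single k c : LaurentPolynomial ℂ) = AddMonoidAlgebra.single k (c * (-1:ℂ)^k) := by
  rw [nsub_def, AddMonoidAlgebra.coeff_single, Finsupp.sum_single_index (by simp)]
lemma ssub_single (k : ℤ) (c : ℂ) :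
    ssub (AddMonoidAlgebra.single k c : LaurentPolynomial ℂ) = AddMonoidAlgebra.single (2*k) c := by
  rw [ssub_def, AddMonoidAlgebra.coeff_single, Finsupp.sum_single_index (by simp)]
lemma leval_single (z : ℂ) (k : ℤ) (c : ℂ) :
    leval z (AddMonoidAlgebra.single k c : LaurentPolynomial ℂ) = c * z ^ k := by
  rw [_root_.leval, AddMonoidAlgebra.coeff_single, Finsupp.sum_single_index (by simp)]

lemma leval_add (z : ℂ) (p q : LaurentPolynomial ℂ) : leval z (p+q) = leval z p + leval z q :=
  (levalA z).map_add p q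
lemma leval_sub (z : ℂ) (p q : LaurentPolynomial ℂ) : leval z (p-q) = leval z p - leval z q :=
  (levalA z).map_sub p q
lemma nsub_sub (p q : LaurentPolynomial ℂ) : nsub (p-q) = nsub p - nsub q :=
  nsubA.map_sub p q

lemma leval_sum (z : ℂ) (p : LaurentPolynomial ℂ) (f : ℤ → ℂ → LaurentPolynomial ℂ) :
    leval z (p.coeff.sum f) = p.coeff.sum fun k c => leval z (f k c) :=
  map_finsuppSum (levalA z) p.coeff f
lemma nsub_sum (p : LaurentPolynomial ℂ) (f : ℤ → ℂ → LaurentPolynomial ℂ) :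
    nsub (p.coeff.sum f) = p.coeff.sum fun k c => nsub (f k c) :=
  map_finsuppSum nsubA p.coeff f
lemma ssub_sum (p : LaurentPolynomial ℂ) (f : ℤ → ℂ → LaurentPolynomial ℂ) :
    ssub (p.coeff.sum f) = p.coeff.sum fun k c => ssub (f k c) :=
  map_finsuppSum ssubA p.coeff f

lemma leval_mul (z : ℂ) (hz : z ≠ 0) (p q : LaurentPolynomial ℂ) :
    leval z (p * q) = leval z p * leval z q := by
  rw [AddMonoidAlgebra.mul_def, leval_sum]
  simp_rw [leval_sum, leval_single]
  rw [_root_.leval, _root_.leval, Finsupp.sum_mul]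
  refine Finsupp.sum_congr fun k _ => ?_
  rw [Finsupp.mul_sum]
  refine Finsupp.sum_congr fun l _ => ?_
  rw [zpow_add₀ hz]; ring

lemma nsub_mul (p q : LaurentPolynomial ℂ) : nsub (p * q) = nsub p * nsub q := by
  rw [AddMonoidAlgebra.mul_def, nsub_sum]
  simp_rw [nsub_sum, nsub_single]
  rw [nsub_def, nsub_def, Finsupp.sum_mul]
  refine Finsupp.sum_congr fun k _ => ?_
  rw [Finsupp.mul_sum]
  refine Finsupp.sum_congr fun l _ => ?_
  rw [AddMonoidAlgebra.single_mul_single, zpow_add₀ (by norm_num : (-1:ℂ) ≠ 0)]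
  ring_nf

lemma nsub_nsub (p : LaurentPolynomial ℂ) : nsub (nsub p) = p := by
  rw [nsub_def p, nsub_sum]
  simp_rw [nsub_single]
  rw [show (fun (k:ℤ) (c:ℂ) => AddMonoidAlgebra.single k (c * (-1:ℂ)^k * (-1:ℂ)^k)) = fun k c => AddMonoidAlgebra.single k c by
    funext k c
    rw [mul_assoc, ← mul_zpow, neg_mul_neg, one_mul, _root_.one_zpow, mul_one]]
  exact AddMonoidAlgebra.sum_coeff_single p

lemma nsub_T1 : nsub (LaurentPolynomial.T 1 : LaurentPolynomial ℂ) = - LaurentPolynomial.T 1 := by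
  have : (LaurentPolynomial.T 1 : LaurentPolynomial ℂ) = AddMonoidAlgebra.single 1 1 := by rw [single_eq_C_mul_T]; simp
  rw [this, nsub_single]
  simp

lemma nsub_apply (p : LaurentPolynomial ℂ) (k : ℤ) : (nsub p).coeff k = p.coeff k * (-1:ℂ)^k := by
  classical
  rw [nsub_def, AddMonoidAlgebra.coeff_finsuppSum, Finsupp.sum_apply]
  simp_rw [AddMonoidAlgebra.coeff_single, Finsupp.single_apply]
  rw [Finsupp.sum_ite_eq' p.coeff k (fun j c => c * (-1:ℂ)^j)]
  by_cases hk : k ∈ p.coeff.support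
  · simp [hk]
  · simp [hk, Finsupp.notMem_support_iff.mp hk]

lemma leval_nsub (z : ℂ) (p : LaurentPolynomial ℂ) : leval z (nsub p) = leval (-z) p := by
  rw [nsub_def, leval_sum]
  simp_rw [leval_single]
  rw [_root_.leval]
  refine Finsupp.sum_congr fun k _ => ?_
  rw [show (-z) = (-1)*z by ring, mul_zpow]
  ring

lemma leval_lstar (z : ℂ) (hz : ‖z‖ = 1) (p : LaurentPolynomial ℂ) :
    leval z (lstar p) = starRingEnd ℂ (leval z p) := by
  rw [lstar_def, leval_sum]
  simp_rw [leval_single]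
  rw [_root_.leval, map_finsuppSum (starRingEnd ℂ) p.coeff fun k c => c * z ^ k]
  refine Finsupp.sum_congr fun k _ => ?_
  simp only [_root_.map_mul, map_zpow₀]
  rw [← Complex.inv_eq_conj hz, _root_.inv_zpow, ← _root_.zpow_neg]

lemma leval_ssub (z : ℂ) (hz : z ≠ 0) (p : LaurentPolynomial ℂ) :
    leval z (ssub p) = leval (z^2) p := by
  rw [ssub_def, leval_sum]
  simp_rw [leval_single]
  rw [_root_.leval]
  refine Finsupp.sum_congr fun k _ => ?_
  rw [show ((2:ℤ)*k) = k + k by ring, zpow_add₀ hz, sq, mul_zpow]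

lemma leval_one (z : ℂ) : leval z (1 : LaurentPolynomial ℂ) = 1 := by
  have : (1 : LaurentPolynomial ℂ) = AddMonoidAlgebra.single 0 1 := rfl
  rw [this, leval_single]; simp

lemma leval_T1 (z : ℂ) : leval z (LaurentPolynomial.T 1 : LaurentPolynomial ℂ) = z := by
  have : (LaurentPolynomial.T 1 : LaurentPolynomial ℂ) = AddMonoidAlgebra.single 1 1 := by rw [single_eq_C_mul_T]; simp
  rw [this, leval_single]; simp

end Stmt17Aux

theorem stmt17 (a b₁ b₂ : LaurentPolynomial ℂ)
    (h : (!![a, b₁, b₂; nsub a, nsub b₁, nsub b₂] : Matrix (Fin 2) (Fin 3) (LaurentPolynomial ℂ)) *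
          mstar !![a, b₁, b₂; nsub a, nsub b₁, nsub b₂] = 1) :
    ∃ d : LaurentPolynomial ℂ,
      ssub d = LaurentPolynomial.T 1 * (b₁ * nsub b₂ - nsub b₁ * b₂) ∧
      ∀ z : ℂ, ‖z‖ = 1 →
        ‖leval (z ^ 2) d‖ ^ 2 =
          1 - ‖leval z a‖ ^ 2 - ‖leval (-z) a‖ ^ 2 := by
  classical
  open Stmt17Aux in
  set q : LaurentPolynomial ℂ := LaurentPolynomial.T 1 * (b₁ * nsub b₂ - nsub b₁ * b₂) with hqdef
  have hnq : nsub q = q := by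
    rw [hqdef, Stmt17Aux.nsub_mul, Stmt17Aux.nsub_sub, Stmt17Aux.nsub_mul, Stmt17Aux.nsub_mul,
      Stmt17Aux.nsub_nsub, Stmt17Aux.nsub_nsub, Stmt17Aux.nsub_T1]
    ring
  have hodd : ∀ k : ℤ, k % 2 = 1 → q.coeff k = 0 := by
    intro k hk
    have h1 : q.coeff k * (-1:ℂ)^k = q.coeff k := by
      conv_rhs => rw [← hnq]
      rw [Stmt17Aux.nsub_apply]
    have h2 : (-1:ℂ)^k = -1 := Odd.neg_one_zpow (Int.odd_iff.mpr hk)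
    rw [h2] at h1
    have h3 : (2:ℂ) * q.coeff k = 0 := by linear_combination - h1
    exact (mul_eq_zero.mp h3).resolve_left two_ne_zero
  set d : LaurentPolynomial ℂ := q.coeff.sum fun k c => AddMonoidAlgebra.single (k/2) c with hddef
  have hssub : ssub d = q := by
    rw [hddef, Stmt17Aux.ssub_sum]
    simp_rw [Stmt17Aux.ssub_single]
    refine Eq.trans ?_ (AddMonoidAlgebra.sum_coeff_single q)
    refine Finsupp.sum_congr fun k hk => ?_
    have hk0 : q.coeff k ≠ 0 := Finsupp.mem_support_iff.mp hk
    have hk2 : k % 2 = 0 := by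
      by_contra hodd'
      exact hk0 (hodd k (by omega))
    congr 1
    omega
  refine ⟨d, hssub, ?_⟩
  intro z hz
  have hz0 : z ≠ 0 := fun h0 => by simp [h0] at hz
  have h00 := congrFun (congrFun h 0) 0
  have h01 := congrFun (congrFun h 0) 1
  have h10 := congrFun (congrFun h 1) 0
  have h11 := congrFun (congrFun h 1) 1
  simp only [Matrix.mul_apply, mstar, Matrix.transpose_apply, Matrix.map_apply,
    Fin.sum_univ_three, Matrix.one_apply, Matrix.cons_val', Matrix.cons_val_zero,
    Matrix.cons_val_one, Matrix.head_cons, Matrix.empty_val', Matrix.cons_val_fin_one,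
    Matrix.head_fin_const, Matrix.of_apply, if_true, if_false, ite_true, ite_false,
    Fin.isValue, one_ne_zero, zero_ne_one, reduceIte] at h00 h01 h10 h11
  set A := leval z a with hA
  set A' := leval (-z) a with hA'
  set B₁ := leval z b₁ with hB₁
  set B₁' := leval (-z) b₁ with hB₁'
  set B₂ := leval z b₂ with hB₂
  set B₂' := leval (-z) b₂ with hB₂'
  have lsimp := Stmt17Aux.leval_mul z hz0
  have e1 : A * starRingEnd ℂ A + B₁ * starRingEnd ℂ B₁ + B₂ * starRingEnd ℂ B₂ = 1 := by
    have := congrArg (leval z) h00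
    simpa [Stmt17Aux.leval_add, lsimp, Stmt17Aux.leval_lstar z hz, Stmt17Aux.leval_nsub,
      Stmt17Aux.leval_one] using this
  have e2 : A * starRingEnd ℂ A' + B₁ * starRingEnd ℂ B₁' + B₂ * starRingEnd ℂ B₂' = 0 := by
    have := congrArg (leval z) h01
    simpa [Stmt17Aux.leval_add, lsimp, Stmt17Aux.leval_lstar z hz, Stmt17Aux.leval_nsub,
      Stmt17Aux.leval_one, Stmt17Aux.levalA, show leval z 0 = 0 from (Stmt17Aux.levalA z).map_zero] using this
  have e3 : A' * starRingEnd ℂ A + B₁' * starRingEnd ℂ B₁ + B₂' * starRingEnd ℂ B₂ = 0 := by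
    have := congrArg (leval z) h10
    simpa [Stmt17Aux.leval_add, lsimp, Stmt17Aux.leval_lstar z hz, Stmt17Aux.leval_nsub,
      Stmt17Aux.leval_one, Stmt17Aux.levalA, show leval z 0 = 0 from (Stmt17Aux.levalA z).map_zero] using this
  have e4 : A' * starRingEnd ℂ A' + B₁' * starRingEnd ℂ B₁' + B₂' * starRingEnd ℂ B₂' = 1 := by
    have := congrArg (leval z) h11
    simpa [Stmt17Aux.leval_add, lsimp, Stmt17Aux.leval_lstar z hz, Stmt17Aux.leval_nsub,
      Stmt17Aux.leval_one] using this
  set X := leval (z^2) d with hXdef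
  have h1 : leval z (ssub d) = leval (z^2) d := Stmt17Aux.leval_ssub z hz0 d
  rw [hssub] at h1
  have hX : X = z * (B₁ * B₂' - B₁' * B₂) := by
    rw [hXdef, ← h1, hqdef, lsimp, Stmt17Aux.leval_sub, lsimp, lsimp, Stmt17Aux.leval_T1,
      Stmt17Aux.leval_nsub, Stmt17Aux.leval_nsub]
  have hzz : z * starRingEnd ℂ z = 1 := by
    rw [Complex.mul_conj]
    norm_cast
    simp [Complex.normSq_eq_norm_sq, hz]
  have hXc : starRingEnd ℂ X = starRingEnd ℂ z *
      (starRingEnd ℂ B₁ * starRingEnd ℂ B₂' - starRingEnd ℂ B₁' * starRingEnd ℂ B₂) := by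
    rw [hX, _root_.map_mul, map_sub, _root_.map_mul, _root_.map_mul]
  have f1 : B₁ * starRingEnd ℂ B₁ + B₂ * starRingEnd ℂ B₂ = 1 - A * starRingEnd ℂ A := by
    linear_combination e1
  have f2 : B₁ * starRingEnd ℂ B₁' + B₂ * starRingEnd ℂ B₂' = -(A * starRingEnd ℂ A') := by
    linear_combination e2
  have f3 : B₁' * starRingEnd ℂ B₁ + B₂' * starRingEnd ℂ B₂ = -(A' * starRingEnd ℂ A) := by
    linear_combination e3
  have f4 : B₁' * starRingEnd ℂ B₁' + B₂' * starRingEnd ℂ B₂' = 1 - A' * starRingEnd ℂ A' := by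
    linear_combination e4
  have g14 : (B₁ * starRingEnd ℂ B₁ + B₂ * starRingEnd ℂ B₂) *
      (B₁' * starRingEnd ℂ B₁' + B₂' * starRingEnd ℂ B₂')
      = (1 - A * starRingEnd ℂ A) * (1 - A' * starRingEnd ℂ A') := by rw [f1, f4]
  have g23 : (B₁ * starRingEnd ℂ B₁' + B₂ * starRingEnd ℂ B₂') *
      (B₁' * starRingEnd ℂ B₁ + B₂' * starRingEnd ℂ B₂)
      = (A * starRingEnd ℂ A') * (A' * starRingEnd ℂ A) := by rw [f2, f3]; ring
  have key : X * starRingEnd ℂ X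
      = 1 - A * starRingEnd ℂ A - A' * starRingEnd ℂ A' := by
    rw [hXc, hX]
    linear_combination ((B₁*B₂' - B₁'*B₂) *
        (starRingEnd ℂ B₁ * starRingEnd ℂ B₂' - starRingEnd ℂ B₁' * starRingEnd ℂ B₂)) * hzz
      + g14 - g23
  rw [Complex.sq_norm, Complex.sq_norm, Complex.sq_norm]
  rw [Complex.mul_conj, Complex.mul_conj, Complex.mul_conj] at key
  exact_mod_cast key
end
end
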